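/- Let k be a positive integer and let S₁ and S₂ be k-overcrowded subsets of a matroid. Then S₁ ∪ S₂ is also k-overcrowded. -/

import Mathlib

noncomputable def mrk {α : Type*} (M : Matroid α) (X : Set α) : ℕ :=
  sSup {n | ∃ I, I ⊆ X ∧ M.Indep I ∧ I.ncard = n}

/-- A set `S` is `k`-overcrowded if `|S \ Sp| ≥ k·(rk S − rk Sp)` for every `Sp ⊆ S`. -/
def Overcrowded {α : Type*} (M : Matroid α) (k : ℕ) (S : Set α) : Prop :=
  ∀ Sp ⊆ S, k * (mrk M S - mrk M Sp) ≤ (S \ Sp).ncard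

section aux

variable {α : Type*} {M : Matroid α} [M.Finite]

lemma mrk_bddAbove (X : Set α) : BddAbove {n | ∃ I, I ⊆ X ∧ M.Indep I ∧ I.ncard = n} := by
  refine ⟨M.E.ncard, ?_⟩
  rintro n ⟨I, hIX, hI, rfl⟩
  exact Set.ncard_le_ncard hI.subset_ground M.ground_finite

lemma ncard_le_mrk {I X : Set α} (hIX : I ⊆ X) (hI : M.Indep I) : I.ncard ≤ mrk M X :=
  le_csSup (mrk_bddAbove X) ⟨I, hIX, hI, rfl⟩

lemma mrk_eq_of_basis' {I X : Set α} (hI : M.IsBasis' I X) : mrk M X = I.ncard := by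
  refine le_antisymm (csSup_le ⟨0, ∅, by simp⟩ ?_) (ncard_le_mrk hI.subset hI.indep)
  rintro n ⟨J, hJX, hJ, rfl⟩
  obtain ⟨J', hJ', hJJ'⟩ := hJ.subset_isBasis'_of_subset hJX
  have hcard := hJ'.encard_eq_encard hI
  have : J'.ncard = I.ncard := by rw [Set.ncard, Set.ncard, hcard]
  exact this ▸ Set.ncard_le_ncard hJJ' (M.set_finite J' hJ'.indep.subset_ground)

lemma mrk_mono {X Y : Set α} (hXY : X ⊆ Y) : mrk M X ≤ mrk M Y := by
  obtain ⟨I, hI⟩ := M.exists_isBasis' X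
  rw [mrk_eq_of_basis' hI]
  exact ncard_le_mrk (hI.subset.trans hXY) hI.indep

lemma mrk_submod (A B : Set α) (hA : A ⊆ M.E) (hB : B ⊆ M.E) :
    mrk M (A ∪ B) + mrk M (A ∩ B) ≤ mrk M A + mrk M B := by
  obtain ⟨I, hI⟩ := M.exists_isBasis' (A ∩ B)
  obtain ⟨J, hJ, hIJ⟩ := hI.indep.subset_isBasis'_of_subset
    (hI.subset.trans (Set.inter_subset_left.trans Set.subset_union_left))
  rw [mrk_eq_of_basis' hJ, mrk_eq_of_basis' hI]
  have hJfin : J.Finite := M.set_finite J hJ.indep.subset_ground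
  have h1 : (J ∩ A).ncard ≤ mrk M A :=
    ncard_le_mrk Set.inter_subset_right (hJ.indep.subset Set.inter_subset_left)
  have h2 : (J ∩ B).ncard ≤ mrk M B :=
    ncard_le_mrk Set.inter_subset_right (hJ.indep.subset Set.inter_subset_left)
  have hunion : (J ∩ A) ∪ (J ∩ B) = J := by
    rw [← Set.inter_union_distrib_left]
    exact Set.inter_eq_left.mpr hJ.subset
  have hkey := Set.ncard_union_add_ncard_inter (J ∩ A) (J ∩ B) (hJfin.inter_of_left A)
    (hJfin.inter_of_left B)
  rw [hunion] at hkey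
  have hIsub : I ⊆ (J ∩ A) ∩ (J ∩ B) := fun x hx =>
    ⟨⟨hIJ hx, (hI.subset hx).1⟩, hIJ hx, (hI.subset hx).2⟩
  have := Set.ncard_le_ncard hIsub ((hJfin.inter_of_left A).inter_of_left _)
  omega

lemma overcrowded_g_le {k : ℕ} {S X : Set α} (hS : S ⊆ M.E) (h : Overcrowded M k S)
    (hX : X ⊆ S) :
    (k : ℤ) * mrk M S - S.ncard ≤ (k : ℤ) * mrk M X - X.ncard := by
  have hfin : S.Finite := M.set_finite S hS
  have hmono := mrk_mono (M := M) hX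
  have hcard := Set.ncard_le_ncard hX hfin
  have hdiff := Set.ncard_diff hX (hfin.subset hX)
  have h0 := h X hX
  zify [hmono, hcard] at h0 hdiff
  linarith [h0, hdiff]

end aux

/-- The union of two `k`-overcrowded sets is `k`-overcrowded. -/
theorem stmt6 {α : Type*} (M : Matroid α) [M.Finite] (k : ℕ) (hk : 0 < k)
    (S₁ S₂ : Set α) (hS₁E : S₁ ⊆ M.E) (hS₂E : S₂ ⊆ M.E)
    (h₁ : Overcrowded M k S₁) (h₂ : Overcrowded M k S₂) :
    Overcrowded M k (S₁ ∪ S₂) := by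
  intro Sp hSp
  have hSE : S₁ ∪ S₂ ⊆ M.E := Set.union_subset hS₁E hS₂E
  have hSpE : Sp ⊆ M.E := hSp.trans hSE
  have hSfin : (S₁ ∪ S₂).Finite := M.set_finite _ hSE
  -- integer valued supermodular function g X = k * rk X - |X|
  have h1' := overcrowded_g_le hS₁E h₁ (Set.inter_subset_left (t := Sp))
  have sub1 := mrk_submod (M := M) S₁ Sp hS₁E hSpE
  have h2' := overcrowded_g_le hS₂E h₂ (Set.inter_subset_left (t := S₁ ∪ Sp))
  have sub2 := mrk_submod (M := M) S₂ (S₁ ∪ Sp) hS₂E (Set.union_subset hS₁E hSpE)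
  have hU : S₂ ∪ (S₁ ∪ Sp) = S₁ ∪ S₂ := by
    ext x
    have := @hSp x
    simp only [Set.mem_union] at *
    tauto
  rw [hU] at sub2
  -- cardinality identities
  have c1 : (S₁ ∪ Sp).ncard + (S₁ ∩ Sp).ncard = S₁.ncard + Sp.ncard := by
    rw [Set.ncard_union_add_ncard_inter _ _ (M.set_finite S₁ hS₁E) (M.set_finite Sp hSpE)]
  have c2 : (S₁ ∪ S₂).ncard + (S₂ ∩ (S₁ ∪ Sp)).ncard = S₂.ncard + (S₁ ∪ Sp).ncard := by
    rw [← hU, Set.ncard_union_add_ncard_inter _ _ (M.set_finite S₂ hS₂E)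
      (M.set_finite _ (Set.union_subset hS₁E hSpE))]
  -- conclude g (S₁ ∪ S₂) ≤ g Sp, then convert back to ℕ
  have hmono := mrk_mono (M := M) hSp
  have hcard := Set.ncard_le_ncard hSp hSfin
  have hdiff := Set.ncard_diff hSp (hSfin.subset hSp)
  have sub1k := Nat.mul_le_mul_left k sub1
  have sub2k := Nat.mul_le_mul_left k sub2
  have hgoal : (k : ℤ) * mrk M (S₁ ∪ S₂) - (S₁ ∪ S₂).ncard ≤ (k : ℤ) * mrk M Sp - Sp.ncard := by
    zify at sub1k sub2k c1 c2
    push_cast [mul_add] at sub1k sub2k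
    linarith
  rw [hdiff]
  zify [hmono, hcard]
  linarith
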